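/- Let n be even and ξ ∈ F_{2^n} with ξ = r^3 + r^{-3} for some nonzero r ∈ F_{2^n}, ξ ≠ 0. Then Tr(ξ^{-1}) = 0. -/

import Mathlib

private lemma traceAux17 (n : ℕ) {F : Type*} [Field F] [Fintype F]
    [CharP F 2] (hF : Fintype.card F = 2 ^ n) (x : F) :
    ∑ i ∈ Finset.range n, (x + x ^ 2) ^ 2 ^ i = 0 := by
  have h2 : (2 : F) = 0 := by exact_mod_cast CharP.cast_eq_zero F 2
  have hsum : ∀ i ∈ Finset.range n, (x + x ^ 2) ^ 2 ^ i = x ^ 2 ^ i + (x ^ 2) ^ 2 ^ i :=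
    fun i _ => add_pow_char_pow x (x ^ 2) 2 i
  rw [Finset.sum_congr rfl hsum, Finset.sum_add_distrib]
  have hshift : ∑ i ∈ Finset.range n, (x ^ 2) ^ 2 ^ i = ∑ i ∈ Finset.range n, x ^ 2 ^ i := by
    have h1 : ∀ i ∈ Finset.range n, (x ^ 2) ^ 2 ^ i = x ^ 2 ^ (i + 1) := fun i _ => by
      rw [← pow_mul, pow_succ']
    rw [Finset.sum_congr rfl h1]
    have hx : x ^ 2 ^ n = x := by rw [← hF]; exact FiniteField.pow_card x
    have e1 := Finset.sum_range_succ' (fun i => x ^ 2 ^ i) n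
    have e2 := Finset.sum_range_succ (fun i => x ^ 2 ^ i) n
    simp only [pow_zero, pow_one, hx] at e1 e2
    have := e1.symm.trans e2
    exact add_right_cancel this
  rw [hshift, ← two_mul, h2, zero_mul]

theorem stmt_17 (n : ℕ) (hn : 0 < n) (hne : Even n) (F : Type*) [Field F] [Fintype F]
    (hF : Fintype.card F = 2 ^ n) (r : F) (hr : r ≠ 0) (ξ : F)
    (hξ : ξ = r ^ 3 + r⁻¹ ^ 3) (hξ0 : ξ ≠ 0) :
    ∑ i ∈ Finset.range n, ξ⁻¹ ^ 2 ^ i = 0 := by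
  have hcard0 : ((2 : ℕ) ^ n : F) = 0 := by
    have := FiniteField.cast_card_eq_zero F
    rw [hF] at this
    exact_mod_cast this
  haveI hchar : CharP F 2 := by
    have hc := ringChar.charP F
    have hp : (ringChar F).Prime := CharP.char_is_prime F (ringChar F)
    have hdvd : ringChar F ∣ 2 ^ n :=
      (CharP.cast_eq_zero_iff F (ringChar F) (2 ^ n)).mp (by exact_mod_cast hcard0)
    have he : ringChar F = 2 :=
      (Nat.prime_dvd_prime_iff_eq hp Nat.prime_two).mp (hp.dvd_of_dvd_pow hdvd)
    rwa [he] at hc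
  have h2 : (2 : F) = 0 := by exact_mod_cast CharP.cast_eq_zero F 2
  have hr1 : r + 1 ≠ 0 := by
    intro h
    have hr' : r = 1 := by linear_combination h - h2
    apply hξ0
    rw [hξ, hr', inv_one]
    linear_combination h2
  have ha1 : r + r⁻¹ + 1 ≠ 0 := by
    intro h
    apply hξ0
    rw [hξ]
    have ha' : r ^ 2 + 1 = r := by
      field_simp at h
      linear_combination h - r * h2
    field_simp
    linear_combination (r ^ 4 + r ^ 3 + r + 1) * ha' + (- r ^ 3) * h2
  -- the key identity
  set u : F := (r + r⁻¹ + 1)⁻¹ with hu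
  set v : F := (r + 1)⁻¹ with hv
  have ha1' : r ^ 2 + r + 1 ≠ 0 := by
    intro h
    apply ha1
    field_simp
    linear_combination h
  have hu' : u = r * (r ^ 2 + r + 1)⁻¹ := by
    rw [hu]
    have hsplit : r + r⁻¹ + 1 = (r ^ 2 + r + 1) * r⁻¹ := by
      field_simp
      ring
    rw [hsplit, mul_inv, inv_inv, mul_comm]
  have key : ξ⁻¹ = (u + u ^ 2) + (v + v ^ 2) := by
    refine inv_eq_of_mul_eq_one_right ?_
    rw [hξ, hu', hv]
    field_simp [hr, hr1, ha1', show r * (r + 1) + 1 ≠ 0 by ring_nf; ring_nf at ha1'; exact ha1']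
    linear_combination (1 + 3*r + 6*r^2 + 6*r^3 + 2*r^4 - 3*r^5 - 4*r^6 - r^7 + 4*r^8 + 6*r^9 + 4*r^10 + r^11) * h2
  rw [key]
  have hsplit : ∀ i ∈ Finset.range n, ((u + u ^ 2) + (v + v ^ 2)) ^ 2 ^ i
      = (u + u ^ 2) ^ 2 ^ i + (v + v ^ 2) ^ 2 ^ i :=
    fun i _ => add_pow_char_pow (u + u ^ 2) (v + v ^ 2) 2 i
  rw [Finset.sum_congr rfl hsplit, Finset.sum_add_distrib,
    traceAux17 n hF u, traceAux17 n hF v, add_zero]
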